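/- Let ρ be a probability measure on (0,∞), let α, σ², P_max, W > 0 and ξ > 0. Define the truncated water-filling power p*(g) = min(max(ξ − σ²/(α g), 0), P_max) for g > 0. Then for every measurable function p : (0,∞) → ℝ with 0 ≤ p(g) ≤ P_max for all g, such that the average-rate constraint ∫ log(1 + (α g/σ²) p(g)) dρ(g) = ∫ log(1 + (α g/σ²) p*(g)) dρ(g) holds (both integrals being finite), one has ∫ p(g) dρ(g) ≥ ∫ p*(g) dρ(g). That is, the truncated water-filling policy minimizes the average transmit power among all power policies achieving the same average data rate. -/

import Mathlib

open MeasureTheory Set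

/-- Pointwise key inequality: the truncated water-filling point minimizes
`x ↦ x - ξ log(1 + c x)` on `[0, Pmax]`. -/
lemma key_pointwise (c ξ Pmax x : ℝ) (hc : 0 < c) (hξ : 0 < ξ) (hP : 0 < Pmax)
    (hx0 : 0 ≤ x) (hxP : x ≤ Pmax) :
    min (max (ξ - 1 / c) 0) Pmax - x ≤
      ξ * (Real.log (1 + c * min (max (ξ - 1 / c) 0) Pmax) - Real.log (1 + c * x)) := by
  set xs := min (max (ξ - 1 / c) 0) Pmax with hxsdef
  have h11 : c * (1 / c) = 1 := by field_simp
  have hxs0 : 0 ≤ xs := le_min (le_max_right _ _) hP.le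
  have h1x : 0 < 1 + c * x := by nlinarith
  have h1s : 0 < 1 + c * xs := by nlinarith
  have hlog : Real.log (1 + c * x) - Real.log (1 + c * xs) ≤ (1 + c * x) / (1 + c * xs) - 1 := by
    rw [← Real.log_div h1x.ne' h1s.ne']
    exact Real.log_le_sub_one_of_pos (div_pos h1x h1s)
  have hfactor : (xs - x) * (1 + c * xs - ξ * c) ≤ 0 := by
    rcases le_or_gt (ξ - 1 / c) 0 with h | h
    · have hxs' : xs = 0 := by rw [hxsdef, max_eq_right h, min_eq_left hP.le]
      have hξc : ξ * c ≤ 1 := by nlinarith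
      nlinarith
    · rcases le_or_gt Pmax (ξ - 1 / c) with h2 | h2
      · have hxs' : xs = Pmax := by
          rw [hxsdef, max_eq_left (by linarith), min_eq_right h2]
        have : 1 + c * Pmax ≤ ξ * c := by nlinarith
        nlinarith
      · have hxs' : xs = ξ - 1 / c := by
          rw [hxsdef, max_eq_left h.le, min_eq_left h2.le]
        have : 1 + c * xs - ξ * c = 0 := by rw [hxs']; field_simp; ring
        nlinarith
  have h2 : xs - x ≤ ξ * c * (xs - x) / (1 + c * xs) := by
    rw [le_div_iff₀ h1s]; nlinarith
  have h3 : ξ * ((1 + c * x) / (1 + c * xs) - 1) = -(ξ * c * (xs - x) / (1 + c * xs)) := by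
    field_simp; ring
  have h4 := mul_le_mul_of_nonneg_left hlog hξ.le
  rw [h3] at h4
  have : ξ * c * (xs - x) / (1 + c * xs) ≤
      ξ * (Real.log (1 + c * xs) - Real.log (1 + c * x)) := by nlinarith
  linarith

/-- **Proposition 1 (verification form).** The truncated water-filling policy
`p*(g) = min(max(ξ − σ²/(α g), 0), P_max)` minimizes the average transmit power among all
measurable power policies `p` with `0 ≤ p ≤ P_max` that achieve the same average data rate
`∫ log(1 + (α g/σ²) p(g)) dρ(g)`, for any probability measure `ρ` on `(0,∞)`. -/
theorem truncated_waterfilling_minimizes_power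
    (ρ : Measure ℝ) [IsProbabilityMeasure ρ] (hρ : ρ (Set.Iic 0) = 0)
    (α σ2 Pmax W ξ : ℝ) (hα : 0 < α) (hσ2 : 0 < σ2) (hPmax : 0 < Pmax)
    (hW : 0 < W) (hξ : 0 < ξ)
    (p : ℝ → ℝ) (hp_meas : Measurable p)
    (hp_bdd : ∀ g, 0 < g → 0 ≤ p g ∧ p g ≤ Pmax)
    (hint_p : Integrable (fun g => Real.log (1 + (α * g / σ2) * p g)) ρ)
    (hint_star : Integrable
      (fun g => Real.log (1 + (α * g / σ2) * min (max (ξ - σ2 / (α * g)) 0) Pmax)) ρ)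
    (hrate : ∫ g, Real.log (1 + (α * g / σ2) * p g) ∂ρ
        = ∫ g, Real.log (1 + (α * g / σ2) * min (max (ξ - σ2 / (α * g)) 0) Pmax) ∂ρ) :
    ∫ g, min (max (ξ - σ2 / (α * g)) 0) Pmax ∂ρ ≤ ∫ g, p g ∂ρ := by
  set ps : ℝ → ℝ := fun g => min (max (ξ - σ2 / (α * g)) 0) Pmax with hpsdef
  have hae : ∀ᵐ g ∂ρ, 0 < g := by
    rw [ae_iff]
    have : {g : ℝ | ¬ 0 < g} = Set.Iic 0 := by ext g; simp [not_lt]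
    rw [this]; exact hρ
  have hps_meas : Measurable ps := by
    apply Measurable.min _ measurable_const
    apply Measurable.max _ measurable_const
    exact measurable_const.sub (measurable_const.div (measurable_const.mul measurable_id))
  have hps_bdd : ∀ g, 0 ≤ ps g ∧ ps g ≤ Pmax := fun g =>
    ⟨le_min (le_max_right _ _) hPmax.le, min_le_right _ _⟩
  have hint_p2 : Integrable p ρ := by
    apply Integrable.mono' (integrable_const Pmax) hp_meas.aestronglyMeasurable
    filter_upwards [hae] with g hg
    rw [Real.norm_eq_abs, abs_le]
    exact ⟨by linarith [(hp_bdd g hg).1], (hp_bdd g hg).2⟩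
  have hint_ps : Integrable ps ρ := by
    apply Integrable.mono' (integrable_const Pmax) hps_meas.aestronglyMeasurable
    filter_upwards with g
    rw [Real.norm_eq_abs, abs_le]
    exact ⟨by linarith [(hps_bdd g).1], (hps_bdd g).2⟩
  have hpw : ∀ᵐ g ∂ρ, ps g - p g ≤
      ξ * (Real.log (1 + (α * g / σ2) * ps g) - Real.log (1 + (α * g / σ2) * p g)) := by
    filter_upwards [hae] with g hg
    have hc : 0 < α * g / σ2 := div_pos (mul_pos hα hg) hσ2
    have hinv : σ2 / (α * g) = 1 / (α * g / σ2) := by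
      field_simp
    have hps' : ps g = min (max (ξ - 1 / (α * g / σ2)) 0) Pmax := by
      rw [hpsdef]; simp only; rw [hinv]
    rw [hps']
    exact key_pointwise (α * g / σ2) ξ Pmax (p g) hc hξ hPmax (hp_bdd g hg).1 (hp_bdd g hg).2
  have hmono : ∫ g, (ps g - p g) ∂ρ ≤
      ∫ g, ξ * (Real.log (1 + (α * g / σ2) * ps g) - Real.log (1 + (α * g / σ2) * p g)) ∂ρ :=
    integral_mono_ae (hint_ps.sub hint_p2) ((hint_star.sub hint_p).const_mul ξ) hpw
  rw [integral_sub hint_ps hint_p2, integral_const_mul,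
    integral_sub hint_star hint_p] at hmono
  have : ∫ g, ps g ∂ρ - ∫ g, p g ∂ρ ≤ ξ * 0 := by
    rw [← hrate] at hmono; simpa [sub_self] using hmono
  rw [mul_zero] at this
  linarith
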